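/- Let $X$ be a paracompact ENR, $k \ge 0$, and let $\sigma: X \times X \to J^k_{X\times X}(PX)$ be a $\mathbb{Z}/2$-equivariant section of the fibred join $\pi_k$ of the path fibration. Then the restriction $\sigma|_{\Delta X}$ is homotopic (through sections over $\Delta X$) to the canonical section $c_k$, where $c_k(x,x) = [c_x, \tfrac{1}{k+1}, \ldots, c_x, \tfrac{1}{k+1}]$ with $c_x$ the constant path at $x$. -/

import Mathlib

open unitInterval Set

noncomputable section

/-- The space of paths in `X`: continuous maps from the unit interval. -/
abbrev PathSp (X : Type*) [TopologicalSpace X] := C(I, X)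

/-- Path reversal, the `ℤ/2`-action on the path space. -/
def pathRev {X : Type*} [TopologicalSpace X] (γ : PathSp X) : PathSp X :=
  γ.comp ⟨unitInterval.symm, unitInterval.continuous_symm⟩

/-- The evaluation map `π : PX → X × X`, `γ ↦ (γ 0, γ 1)`. -/
def evalMap (X : Type*) [TopologicalSpace X] : PathSp X → X × X :=
  fun γ => (γ 0, γ 1)

/-- `σ` is a local section of the evaluation map on `U ⊆ X × X` which is equivariant
with respect to transposition and path reversal. -/
def IsSymSection {X : Type*} [TopologicalSpace X] (U : Set (X × X))
    (sec : C(U, PathSp X)) : Prop :=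
  (∀ u : U, sec u 0 = (u : X × X).1 ∧ sec u 1 = (u : X × X).2) ∧
  (∀ (u : U) (hs : Prod.swap (u : X × X) ∈ U) (t : I),
      sec ⟨Prod.swap (u : X × X), hs⟩ t = sec u (unitInterval.symm t))

/-- `TCΣ(X) ≤ k` : there is a cover of `X × X` by `k+1` invariant open sets,
each admitting an equivariant local section of the evaluation map. -/
def TCSigma_le (X : Type*) [TopologicalSpace X] (k : ℕ) : Prop :=
  ∃ U : Fin (k + 1) → Set (X × X),
    (∀ i, IsOpen (U i)) ∧
    (∀ i, ∀ p ∈ U i, Prod.swap p ∈ U i) ∧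
    (⋃ i, U i) = Set.univ ∧
    (∀ i, ∃ sec : C(U i, PathSp X), IsSymSection (U i) sec)

/-- The symmetrized topological complexity, as an extended natural number. -/
def TCSigma (X : Type*) [TopologicalSpace X] : ℕ∞ :=
  sInf {n : ℕ∞ | ∃ k : ℕ, n = k ∧ TCSigma_le X k}

/-- `TC^{M,Σ}(X) ≤ k`: as for `TCΣ` but each set of the cover contains the diagonal and the
sections are constant on the diagonal. -/
def TCMSigma_le (X : Type*) [TopologicalSpace X] (k : ℕ) : Prop :=
  ∃ U : Fin (k + 1) → Set (X × X),
    (∀ i, IsOpen (U i)) ∧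
    (∀ i, ∀ p ∈ U i, Prod.swap p ∈ U i) ∧
    (∀ i (x : X), (x, x) ∈ U i) ∧
    (⋃ i, U i) = Set.univ ∧
    (∀ i, ∃ sec : C(U i, PathSp X), IsSymSection (U i) sec ∧
      ∀ (x : X) (h : (x, x) ∈ U i) (t : I), sec ⟨(x, x), h⟩ t = x)

/-- The monoidal symmetrized topological complexity, as an extended natural number. -/
def TCMSigma (X : Type*) [TopologicalSpace X] : ℕ∞ :=
  sInf {n : ℕ∞ | ∃ k : ℕ, n = k ∧ TCMSigma_le X k}
/-! ### Fibred joins -/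

/-- Pre-join data: `k+1` points of `E` in a common fibre of `p`, with join coordinates. -/
abbrev JoinPre {E B : Type*} (p : E → B) (k : ℕ) : Type _ :=
  {x : (Fin (k + 1) → E) × (Fin (k + 1) → I) //
    (∀ i j, p (x.1 i) = p (x.1 j)) ∧ (∑ i, ((x.2 i : ℝ))) = 1}

/-- Tuples are identified if the join coordinates agree and the points agree wherever
the join coordinate is nonzero. -/
def joinRel {E B : Type*} (p : E → B) (k : ℕ) (a b : JoinPre p k) : Prop :=
  a.1.2 = b.1.2 ∧ ∀ i, a.1.2 i ≠ 0 → a.1.1 i = b.1.1 i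

/-- The `(k+1)`-fold fibred join `J^k_B(E)` of a map `p : E → B`. -/
def FibredJoin {E B : Type*} [TopologicalSpace E] [TopologicalSpace B]
    (p : E → B) (k : ℕ) : Type _ :=
  Quot (joinRel p k)

instance FibredJoin.instTop {E B : Type*} [TopologicalSpace E] [TopologicalSpace B]
    (p : E → B) (k : ℕ) : TopologicalSpace (FibredJoin p k) :=
  instTopologicalSpaceQuot

lemma JoinPre.exists_ne_zero {E B : Type*} {p : E → B} {k : ℕ} (a : JoinPre p k) :
    ∃ i, a.1.2 i ≠ 0 := by
  by_contra h
  push_neg at h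
  have := a.2.2
  simp only [h] at this
  norm_num at this

/-- The projection `p_k : J^k_B(E) → B`. -/
def joinProj {E B : Type*} [TopologicalSpace E] [TopologicalSpace B]
    (p : E → B) (k : ℕ) : FibredJoin p k → B :=
  Quot.lift (fun a => p (a.1.1 0)) (by
    rintro a b ⟨ht, he⟩
    obtain ⟨i, hi⟩ := a.exists_ne_zero
    have h1 : p (a.1.1 0) = p (a.1.1 i) := a.2.1 0 i
    have h2 : p (b.1.1 i) = p (b.1.1 0) := b.2.1 i 0
    simp only [h1, he i hi, h2])

/-- The class of a tuple in the fibred join. -/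
def joinMk {E B : Type*} [TopologicalSpace E] [TopologicalSpace B]
    (p : E → B) (k : ℕ) (a : JoinPre p k) : FibredJoin p k :=
  Quot.mk _ a
/-- A space is a Euclidean neighbourhood retract (ENR) if it embeds into some `ℝⁿ`
as a retract of an open subset. -/
def IsENR (X : Type*) [TopologicalSpace X] : Prop :=
  ∃ (n : ℕ) (e : X → EuclideanSpace ℝ (Fin n)) (U : Set (EuclideanSpace ℝ (Fin n))),
    Topology.IsEmbedding e ∧ IsOpen U ∧ Set.range e ⊆ U ∧
    ∃ r : U → X, Continuous r ∧ ∀ (x : X) (h : e x ∈ U), r ⟨e x, h⟩ = x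

lemma evalMap_pathRev {X : Type*} [TopologicalSpace X] (γ : PathSp X) :
    evalMap X (pathRev γ) = Prod.swap (evalMap X γ) := by
  show (γ (unitInterval.symm 0), γ (unitInterval.symm 1)) = (γ 1, γ 0)
  rw [unitInterval.symm_zero, unitInterval.symm_one]

/-- The `ℤ/2`-involution on the fibred join of the path fibration, induced by reversing
all paths. -/
def joinInvol (X : Type*) [TopologicalSpace X] (k : ℕ) :
    FibredJoin (evalMap X) k → FibredJoin (evalMap X) k :=
  Quot.map
    (fun a => ⟨((fun i => pathRev (a.1.1 i)), a.1.2),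
      ⟨fun i j => by simp only [evalMap_pathRev, a.2.1 i j], a.2.2⟩⟩)
    (by rintro a b ⟨ht, he⟩; exact ⟨ht, fun i hi => by simp only []; rw [he i hi]⟩)

/-- The canonical section of the fibred join over the diagonal, by constant paths with
equal join coordinates. -/
def joinConstSection (X : Type*) [TopologicalSpace X] (k : ℕ)
    (d : {p : X × X // p.1 = p.2}) : FibredJoin (evalMap X) k :=
  joinMk (evalMap X) k
    ⟨((fun _ => ContinuousMap.const I d.1.1),
      (fun _ => ⟨1 / (k + 1), ⟨by positivity, by
        rw [div_le_one (by positivity)]; linarith [Nat.cast_nonneg (α := ℝ) k]⟩⟩)),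
      ⟨fun i j => rfl, by
        rw [Finset.sum_const, Finset.card_univ, Fintype.card_fin]
        rw [nsmul_eq_mul, Nat.cast_add, Nat.cast_one]
        exact mul_one_div_cancel (by positivity)⟩⟩

/-! ### Auxiliary material for Statement 14 -/

section Aux14

variable {X : Type*} [TopologicalSpace X]

lemma joinRel_equivalence {E B : Type*} (p : E → B) (k : ℕ) :
    Equivalence (joinRel p k) where
  refl a := ⟨rfl, fun _ _ => rfl⟩
  symm {a b} h := ⟨h.1.symm, fun i hi => (h.2 i (by rw [h.1]; exact hi)).symm⟩
  trans {a b c} h1 h2 :=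
    ⟨h1.1.trans h2.1, fun i hi => (h1.2 i hi).trans (h2.2 i (by rw [← h1.1]; exact hi))⟩

lemma warp_mem (u t : I) : u.1 * min t.1 (1 - t.1) ∈ I := by
  have h1 := u.2.1; have h2 := u.2.2; have h3 := t.2.1; have h4 := t.2.2
  have hm1 : (0:ℝ) ≤ min t.1 (1 - t.1) := le_min h3 (by linarith)
  have hm2 : min t.1 (1 - t.1) ≤ 1 := (min_le_left _ _).trans h4
  exact ⟨mul_nonneg h1 hm1, by nlinarith⟩

/-- The basic evaluation map `((γ, u), t) ↦ γ (u · min t (1-t))`. -/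
def bigMap (X : Type*) [TopologicalSpace X] : C((PathSp X × I) × I, X) :=
  ⟨fun q => q.1.1 ⟨q.1.2.1 * min q.2.1 (1 - q.2.1), warp_mem _ _⟩, by
    have h : Continuous fun q : (PathSp X × I) × I =>
        ((q.1.1 : PathSp X), (⟨q.1.2.1 * min q.2.1 (1 - q.2.1), warp_mem _ _⟩ : I)) := by
      refine (continuous_fst.comp continuous_fst).prodMk (Continuous.subtype_mk ?_ _)
      fun_prop
    exact continuous_eval.comp h⟩

/-- The contraction of a path, as a jointly continuous map. -/
def contr (X : Type*) [TopologicalSpace X] : C(PathSp X × I, PathSp X) :=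
  (bigMap X).curry

lemma contr_apply (γ : PathSp X) (u t : I) :
    contr X (γ, u) t = γ ⟨u.1 * min t.1 (1 - t.1), warp_mem u t⟩ := rfl

lemma contr_apply_zero (γ : PathSp X) (u : I) : contr X (γ, u) 0 = γ 0 := by
  rw [contr_apply]; congr 1; apply Subtype.ext; simp

lemma contr_apply_one (γ : PathSp X) (u : I) : contr X (γ, u) 1 = γ 0 := by
  rw [contr_apply]; congr 1; apply Subtype.ext; simp

lemma contr_evalMap (γ : PathSp X) (u : I) :
    evalMap X (contr X (γ, u)) = ((γ 0 : X), (γ 0 : X)) := by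
  unfold evalMap; rw [contr_apply_zero, contr_apply_one]

/-- The join-coordinate interpolation parameter. -/
def mr (s : I) : ℝ := min 1 (2 - 2 * s.1)

lemma mr_mem (s : I) : 0 ≤ mr s ∧ mr s ≤ 1 := by
  have := s.2.1; have := s.2.2
  exact ⟨le_min (by norm_num) (by linarith), min_le_left _ _⟩

/-- The path-contraction parameter. -/
def cu (s : I) : I :=
  ⟨max (1 - 2 * s.1) 0, le_max_right _ _, by have := s.2.1; simp; linarith⟩

lemma cu_eq_zero {s : I} (h : mr s < 1) : (cu s).1 = 0 := by
  have h2 : 2 - 2 * s.1 < 1 := by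
    by_contra h'
    push_neg at h'
    rw [mr, min_eq_left h'] at h
    exact lt_irrefl _ h
  exact max_eq_right (by linarith)

lemma coordVal_mem (k : ℕ) (s t : I) :
    mr s * t.1 + (1 - mr s) / (k + 1) ∈ I := by
  obtain ⟨hm0, hm1⟩ := mr_mem s
  have h3 := t.2.1; have h4 := t.2.2
  have hk : (1:ℝ) ≤ (k:ℝ) + 1 := by
    have := Nat.cast_nonneg (α := ℝ) k; linarith
  have hd : (1 - mr s) / ((k:ℝ) + 1) ≤ 1 - mr s := by
    apply div_le_self (by linarith) hk
  constructor
  · have : (0:ℝ) ≤ (1 - mr s) / ((k:ℝ) + 1) := div_nonneg (by linarith) (by linarith)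
    nlinarith
  · nlinarith

/-- One stage of the homotopy, on representatives. -/
def phiPre (X : Type*) [TopologicalSpace X] (k : ℕ)
    (a : JoinPre (evalMap X) k) (s : I) : JoinPre (evalMap X) k :=
  ⟨((fun i => contr X (a.1.1 i, cu s)),
    (fun i => ⟨mr s * (a.1.2 i).1 + (1 - mr s) / (k + 1), coordVal_mem k s _⟩)),
   ⟨fun i j => by
      rw [contr_evalMap, contr_evalMap]
      have h := congrArg Prod.fst (a.2.1 i j)
      simp only [evalMap] at h
      rw [h],
    by
      have hk : ((k:ℝ) + 1) ≠ 0 := Nat.cast_add_one_ne_zero k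
      simp only []
      rw [Finset.sum_add_distrib, ← Finset.mul_sum, a.2.2, Finset.sum_const,
        Finset.card_univ, Fintype.card_fin, nsmul_eq_mul]
      push_cast
      field_simp
      ring⟩⟩

lemma phiPre_rel (X : Type*) [TopologicalSpace X] (k : ℕ)
    {a b : JoinPre (evalMap X) k} (h : joinRel (evalMap X) k a b) (s : I) :
    joinRel (evalMap X) k (phiPre X k a s) (phiPre X k b s) := by
  constructor
  · funext i
    apply Subtype.ext
    simp only [phiPre, h.1]
  · intro i hi
    by_cases ht : a.1.2 i = 0
    · -- the contraction parameter must be 0, and basepoints agree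
      have hmlt : mr s < 1 := by
        by_contra hm
        push_neg at hm
        have hm' : mr s = 1 := le_antisymm (mr_mem s).2 hm
        apply hi
        apply Subtype.ext
        simp only [phiPre, hm', ht]
        norm_num
      have hcu : (cu s).1 = 0 := cu_eq_zero hmlt
      obtain ⟨i0, hi0⟩ := a.exists_ne_zero
      have e1 : a.1.1 i 0 = a.1.1 i0 0 := congrArg Prod.fst (a.2.1 i i0)
      have e2 : a.1.1 i0 = b.1.1 i0 := h.2 i0 hi0
      have e3 : b.1.1 i0 0 = b.1.1 i 0 := congrArg Prod.fst (b.2.1 i0 i)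
      show contr X (a.1.1 i, cu s) = contr X (b.1.1 i, cu s)
      ext t
      rw [contr_apply, contr_apply]
      have harg : (⟨(cu s).1 * min t.1 (1 - t.1), warp_mem _ t⟩ : I) = 0 := by
        apply Subtype.ext; simp [hcu]
      rw [harg]
      rw [e1, e2, e3]
    · show contr X (a.1.1 i, cu s) = contr X (b.1.1 i, cu s)
      rw [h.2 i ht]

/-- The homotopy, as a continuous map on the join times the interval. -/
def phiC (X : Type*) [TopologicalSpace X] (k : ℕ) :
    C(JoinPre (evalMap X) k × I, FibredJoin (evalMap X) k) :=
  ⟨fun q => Quot.mk _ (phiPre X k q.1 q.2), by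
    apply continuous_quot_mk.comp
    apply Continuous.subtype_mk
    apply Continuous.prodMk
    · apply continuous_pi
      intro i
      apply (contr X).continuous.comp
      apply Continuous.prodMk
      · fun_prop
      · apply Continuous.subtype_mk
        fun_prop
    · apply continuous_pi
      intro i
      apply Continuous.subtype_mk
      have h2 : Continuous fun q : JoinPre (evalMap X) k × I => mr q.2 := by
        unfold mr; fun_prop
      fun_prop⟩

/-- The homotopy, descended to the fibred join. -/
def psiMap (X : Type*) [TopologicalSpace X] (k : ℕ) :
    FibredJoin (evalMap X) k → C(I, FibredJoin (evalMap X) k) :=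
  Quot.lift (fun a => (phiC X k).curry a)
    (fun a b h => ContinuousMap.ext fun s => Quot.sound (phiPre_rel X k h s))

lemma psiMap_continuous (X : Type*) [TopologicalSpace X] (k : ℕ) :
    Continuous (psiMap X k) :=
  isQuotientMap_quot_mk.continuous_iff.mpr (phiC X k).curry.continuous

lemma psiMap_mk (X : Type*) [TopologicalSpace X] (k : ℕ)
    (a : JoinPre (evalMap X) k) (s : I) :
    psiMap X k (Quot.mk _ a) s = Quot.mk _ (phiPre X k a s) := rfl

end Aux14

/-- Let `X` be a paracompact ENR and `σ` an equivariant section of the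
`(k+1)`-fold fibred join of the path fibration. Then over the diagonal, `σ` is homotopic
through sections to the canonical constant-path section. -/
theorem section_of_fibred_join_homotopic_const
    (X : Type*) [TopologicalSpace X] [ParacompactSpace X] (hX : IsENR X) (k : ℕ)
    (sec : C(X × X, FibredJoin (evalMap X) k))
    (hsec : ∀ q, joinProj (evalMap X) k (sec q) = q)
    (hequiv : ∀ q, sec (Prod.swap q) = joinInvol X k (sec q)) :
    ∃ F : C({p : X × X // p.1 = p.2} × I, FibredJoin (evalMap X) k),
      (∀ d, F (d, 0) = sec d) ∧
      (∀ d, F (d, 1) = joinConstSection X k d) ∧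
      (∀ d t, joinProj (evalMap X) k (F (d, t)) = (d : X × X)) := by
  classical
  refine ⟨⟨fun q => psiMap X k (sec (q.1 : X × X)) q.2, ?_⟩, ?_, ?_, ?_⟩
  · exact continuous_eval.comp
      (((psiMap_continuous X k).comp
        (sec.continuous.comp (continuous_subtype_val.comp continuous_fst))).prodMk
        continuous_snd)
  · -- at time 0 we recover the section
    intro d
    obtain ⟨a, ha⟩ := Quot.exists_rep (sec (d : X × X))
    have hswap : Prod.swap (d : X × X) = (d : X × X) := Prod.ext d.2.symm d.2
    have hsym0 : Quot.mk (joinRel (evalMap X) k) a =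
        joinInvol X k (Quot.mk (joinRel (evalMap X) k) a) := by
      have h := hequiv (d : X × X)
      rw [hswap] at h
      rw [← ha] at h
      exact h
    have hrel : joinRel (evalMap X) k a
        ⟨((fun i => pathRev (a.1.1 i)), a.1.2),
          ⟨fun i j => by simp only [evalMap_pathRev, a.2.1 i j], a.2.2⟩⟩ :=
      (joinRel_equivalence (evalMap X) k).eqvGen_iff.mp (Quot.eqvGen_exact hsym0)
    have hsym : ∀ i, a.1.2 i ≠ 0 → a.1.1 i = pathRev (a.1.1 i) := fun i hi => hrel.2 i hi
    show psiMap X k (sec (d : X × X)) 0 = sec (d : X × X)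
    rw [← ha, psiMap_mk]
    apply Quot.sound
    have hmr0 : mr 0 = 1 := by unfold mr; norm_num
    constructor
    · funext i
      apply Subtype.ext
      simp only [phiPre, hmr0]
      ring
    · intro i hi
      have hti : a.1.2 i ≠ 0 := by
        intro h0
        apply hi
        apply Subtype.ext
        simp only [phiPre, hmr0, h0]
        norm_num
      show contr X (a.1.1 i, cu 0) = a.1.1 i
      have hcu0 : (cu 0).1 = 1 := by unfold cu; norm_num
      ext t
      rw [contr_apply]
      rcases le_or_gt t.1 (1 - t.1) with hc | hc
      · congr 1
        apply Subtype.ext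
        simp [hcu0, min_eq_left hc]
      · have hmin : min t.1 (1 - t.1) = 1 - t.1 := min_eq_right hc.le
        have harg : (⟨(cu 0).1 * min t.1 (1 - t.1), warp_mem _ t⟩ : I) =
            unitInterval.symm t := by
          apply Subtype.ext
          simp [hcu0, hmin, unitInterval.coe_symm_eq]
        rw [harg]
        have := DFunLike.congr_fun (hsym i hti) t
        rw [this]
        rfl
  · -- at time 1 we get the constant section
    intro d
    obtain ⟨a, ha⟩ := Quot.exists_rep (sec (d : X × X))
    have hp : evalMap X (a.1.1 0) = (d : X × X) := by
      have h := hsec (d : X × X)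
      rw [← ha] at h
      exact h
    have hbase : ∀ i, a.1.1 i 0 = (d : X × X).1 := by
      intro i
      have h1 : a.1.1 i 0 = a.1.1 0 0 := congrArg Prod.fst (a.2.1 i 0)
      have h2 : a.1.1 0 0 = (d : X × X).1 := congrArg Prod.fst hp
      rw [h1, h2]
    show psiMap X k (sec (d : X × X)) 1 = joinConstSection X k d
    rw [← ha, psiMap_mk]
    apply Quot.sound
    have hmr1 : mr 1 = 0 := by unfold mr; norm_num
    constructor
    · funext i
      apply Subtype.ext
      simp only [phiPre, joinConstSection, joinMk, hmr1]
      ring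
    · intro i _
      show contr X (a.1.1 i, cu 1) = ContinuousMap.const I (d : X × X).1
      ext t
      rw [contr_apply]
      have hcu1 : (cu 1).1 = 0 := by unfold cu; norm_num
      have harg : (⟨(cu 1).1 * min t.1 (1 - t.1), warp_mem _ t⟩ : I) = 0 := by
        apply Subtype.ext
        simp [hcu1]
      rw [harg, hbase i]
      rfl
  · -- it is a homotopy through sections
    intro d s
    obtain ⟨a, ha⟩ := Quot.exists_rep (sec (d : X × X))
    have hp : evalMap X (a.1.1 0) = (d : X × X) := by
      have h := hsec (d : X × X)
      rw [← ha] at h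
      exact h
    have hb : a.1.1 0 0 = (d : X × X).1 := congrArg Prod.fst hp
    show joinProj (evalMap X) k (psiMap X k (sec (d : X × X)) s) = (d : X × X)
    rw [← ha, psiMap_mk]
    show evalMap X (contr X (a.1.1 0, cu s)) = (d : X × X)
    rw [contr_evalMap, hb]
    exact Prod.ext rfl d.2
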